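/- arXiv:2502.06399 — 3 statements merged into one kernel-verified Lean document; each statement's English description precedes it below -/
import Mathlib

section
/- Let α ∈ (0, 1) ∪ (1, ∞), let A_1, …, A_n be density matrices in ℂ^{d×d} with ∑_{j=1}^n A_j positive definite, let w ∈ ℝ^n have strictly positive entries with ∑_{j=1}^n w[j] = 1, and let Q_⋆(w) be the unique minimizer over density matrices of Q ↦ ∑_{j=1}^n w[j] D_α(A_j ‖ Q). Then for every positive definite Hermitian Q ∈ ℂ^{d×d}: (i) | ∑_{j=1}^n w[j] D_α(A_j ‖ Q) − ∑_{j=1}^n w[j] D_α(A_j ‖ Q_⋆(w)) | ≤ |1/(1−α)| · d_T( Q_⋆(w)^{1−α}, Q^{1−α} ), and (ii) for every j, | D_α(A_j ‖ Q) − D_α(A_j ‖ Q_⋆(w)) | ≤ |1/(1−α)| · d_T( Q_⋆(w)^{1−α}, Q^{1−α} ). -/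
open scoped ComplexOrder
open Matrix

noncomputable section

/-- Real power of a matrix via the functional calculus (spectral decomposition);
junk value `A` if `A` is not Hermitian. -/
noncomputable def mpow {d : ℕ} (A : Matrix (Fin d) (Fin d) ℂ) (r : ℝ) :
    Matrix (Fin d) (Fin d) ℂ :=
  if hA : A.IsHermitian then
    (hA.eigenvectorUnitary : Matrix (Fin d) (Fin d) ℂ) *
      Matrix.diagonal (fun i => ((hA.eigenvalues i ^ r : ℝ) : ℂ)) *
      star (hA.eigenvectorUnitary : Matrix (Fin d) (Fin d) ℂ)
  else A

/-- The Loewner order: `A ⪯ B` iff `B - A` is positive semidefinite. -/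
def loewnerLE {d : ℕ} (A B : Matrix (Fin d) (Fin d) ℂ) : Prop := (B - A).PosSemidef

/-- Thompson metric on positive definite matrices (extended-real valued):
`inf { r ≥ 0 | exp (-r) • V ⪯ U ⪯ exp r • V }`, equal to `⊤` if no such `r` exists. -/
noncomputable def dTmat {d : ℕ} (V U : Matrix (Fin d) (Fin d) ℂ) : EReal :=
  sInf {x : EReal | ∃ r : ℝ, 0 ≤ r ∧ x = (r : EReal) ∧
    loewnerLE (Real.exp (-r) • V) U ∧ loewnerLE U (Real.exp r • V)}

open Classical in
/-- Thompson metric on entrywise-positive vectors (extended-real valued):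
`max_i |log (v i / u i)|`. -/
noncomputable def dTvec {d : ℕ} (v u : Fin d → ℝ) : EReal :=
  (⨆ i, if 0 < v i ∧ 0 < u i then ((|Real.log (v i / u i)| : ℝ) : EReal) else (⊤ : EReal)) ⊔ 0

/-- A density matrix: Hermitian positive semidefinite with unit trace. -/
def IsDensityMatrix {d : ℕ} (A : Matrix (Fin d) (Fin d) ℂ) : Prop :=
  A.PosSemidef ∧ A.trace = 1

/-- The operator `T_F (U) = (∑ j, w j • A j ^ α / Tr[A j ^ α * U]) ^ ((1 - α)/α)`. -/
noncomputable def TF {n d : ℕ} (w : Fin n → ℝ) (A : Fin n → Matrix (Fin d) (Fin d) ℂ)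
    (α : ℝ) (U : Matrix (Fin d) (Fin d) ℂ) : Matrix (Fin d) (Fin d) ℂ :=
  mpow (∑ j, ((w j : ℂ) / Matrix.trace (mpow (A j) α * U)) • mpow (A j) α) ((1 - α) / α)

/-- The Petz–Rényi divergence of order `α` (real-valued version, intended for
positive definite `Q`): `(α - 1)⁻¹ * log Tr[A^α * Q^(1-α)]`. -/
noncomputable def petzRenyi {d : ℕ} (α : ℝ) (A Q : Matrix (Fin d) (Fin d) ℂ) : ℝ :=
  (α - 1)⁻¹ * Real.log (Matrix.trace (mpow A α * mpow Q (1 - α))).re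

open Classical in
/-- The Petz–Rényi divergence of order `α`, extended-real valued; `⊤` whenever the
defining formula is not well-defined. -/
noncomputable def petzRenyiE {d : ℕ} (α : ℝ) (A Q : Matrix (Fin d) (Fin d) ℂ) : EReal :=
  if 0 < (Matrix.trace (mpow A α * mpow Q (1 - α))).re ∧
      (1 < α → ∀ x : Fin d → ℂ, Q.mulVec x = 0 → A.mulVec x = 0) then
    (((α - 1)⁻¹ * Real.log (Matrix.trace (mpow A α * mpow Q (1 - α))).re : ℝ) : EReal)
  else ⊤

/-- The objective `F(Q) = ∑ j, w j * D_α(A j ‖ Q)`, extended-real valued. -/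
noncomputable def FE {n d : ℕ} (w : Fin n → ℝ) (A : Fin n → Matrix (Fin d) (Fin d) ℂ)
    (α : ℝ) (Q : Matrix (Fin d) (Fin d) ℂ) : EReal :=
  ∑ j, ((w j : ℝ) : EReal) * petzRenyiE α (A j) Q

/-- Membership in the probability simplex `Δ_d`. -/
def memSimplex {d : ℕ} (q : Fin d → ℝ) : Prop := (∀ i, 0 ≤ q i) ∧ ∑ i, q i = 1

/-- The classical operator `T_f (u) = (∑ j, w j • a j ^ α / ⟨a j ^ α, u⟩) ^ ((1 - α)/α)`,
entrywise. -/
noncomputable def Tf {n d : ℕ} (w : Fin n → ℝ) (a : Fin n → Fin d → ℝ) (α : ℝ)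
    (u : Fin d → ℝ) : Fin d → ℝ :=
  fun i => (∑ j, w j * (a j i ^ α) / (∑ k, (a j k ^ α) * u k)) ^ ((1 - α) / α)

open Classical in
/-- The classical Rényi divergence term, extended-real valued; `⊤` whenever the
defining formula is not well-defined. -/
noncomputable def petzVecE {d : ℕ} (α : ℝ) (a q : Fin d → ℝ) : EReal :=
  if 0 < (∑ i, a i ^ α * q i ^ (1 - α)) ∧ (1 < α → ∀ i, q i = 0 → a i = 0) then
    (((α - 1)⁻¹ * Real.log (∑ i, a i ^ α * q i ^ (1 - α)) : ℝ) : EReal)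
  else ⊤

/-- The classical objective `f(q) = ∑ j, w j * (α-1)⁻¹ * log (∑ i, (a j i)^α * (q i)^(1-α))`,
real-valued version (intended for entrywise positive `q`). -/
noncomputable def fcl {n d : ℕ} (w : Fin n → ℝ) (a : Fin n → Fin d → ℝ) (α : ℝ)
    (q : Fin d → ℝ) : ℝ :=
  ∑ j, w j * ((α - 1)⁻¹ * Real.log (∑ i, a j i ^ α * q i ^ (1 - α)))

/-- Total CES demand in a Fisher market at prices `p`. -/
noncomputable def demand {n d : ℕ} (w : Fin n → ℝ) (a : Fin n → Fin d → ℝ)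
    (ρ : Fin n → ℝ) (p : Fin d → ℝ) : Fin d → ℝ :=
  fun i => ∑ j, w j * (a j i ^ (1 / (1 - ρ j)) * p i ^ (-(1 / (1 - ρ j)))) /
    (∑ k, a j k ^ (1 / (1 - ρ j)) * p k ^ (-(ρ j / (1 - ρ j))))


open scoped MatrixOrder in
def Matrix.PosSemidef.sqrt {d : ℕ} {M : Matrix (Fin d) (Fin d) ℂ} (_ : M.PosSemidef) :
    Matrix (Fin d) (Fin d) ℂ := CFC.sqrt M

open scoped MatrixOrder in
theorem Matrix.PosSemidef.posSemidef_sqrt {d : ℕ} {M : Matrix (Fin d) (Fin d) ℂ}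
    (hM : M.PosSemidef) : hM.sqrt.PosSemidef := (CFC.sqrt_nonneg M).posSemidef

open scoped MatrixOrder in
theorem Matrix.PosSemidef.sqrt_mul_self {d : ℕ} {M : Matrix (Fin d) (Fin d) ℂ}
    (hM : M.PosSemidef) : hM.sqrt * hM.sqrt = M := CFC.sqrt_mul_sqrt_self M hM.nonneg

section AuxPetz
variable {d : ℕ}

lemma diag_re_nonneg {N : Matrix (Fin d) (Fin d) ℂ} (hN : N.PosSemidef) (i : Fin d) :
    0 ≤ (N i i).re := by
  have h := hN.dotProduct_mulVec_nonneg (Pi.single i 1)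
  have h2 : star (Pi.single i 1 : Fin d → ℂ) ⬝ᵥ N *ᵥ (Pi.single i 1) = N i i := by
    simp [dotProduct, mulVec, Pi.single_apply, Finset.mul_sum, mul_comm]
  rw [h2] at h
  exact (Complex.le_def.mp h).1

lemma trace_re_eq_sum {N : Matrix (Fin d) (Fin d) ℂ} : (N.trace).re = ∑ i, (N i i).re := by
  simp [Matrix.trace, Matrix.diag, Complex.re_sum]

lemma trace_mul_re_nonneg {P M : Matrix (Fin d) (Fin d) ℂ} (hP : P.PosSemidef)
    (hM : M.PosSemidef) : 0 ≤ (Matrix.trace (P * M)).re := by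
  have hS := hM.posSemidef_sqrt
  have hN : (hM.sqrt * P * hM.sqrt).PosSemidef := by
    have := hP.conjTranspose_mul_mul_same hM.sqrt
    rwa [hS.isHermitian.eq] at this
  have h1 : P * M = P * (hM.sqrt * hM.sqrt) := by rw [hM.sqrt_mul_self]
  have htr : Matrix.trace (P * M) = Matrix.trace (hM.sqrt * P * hM.sqrt) := by
    rw [h1, ← Matrix.mul_assoc, Matrix.trace_mul_cycle]
  rw [htr, trace_re_eq_sum]
  exact Finset.sum_nonneg fun i _ => diag_re_nonneg hN i

lemma trace_mul_re_pos {P M : Matrix (Fin d) (Fin d) ℂ} (hP : P.PosSemidef)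
    (htrP : 0 < (Matrix.trace P).re) (hM : M.PosDef) : 0 < (Matrix.trace (P * M)).re := by
  have hS := hP.posSemidef_sqrt
  have hN : (hP.sqrt * M * hP.sqrt).PosSemidef := by
    have := hM.posSemidef.conjTranspose_mul_mul_same hP.sqrt
    rwa [hS.isHermitian.eq] at this
  have h1 : P * M = hP.sqrt * hP.sqrt * M := by rw [hP.sqrt_mul_self]
  have htr : Matrix.trace (P * M) = Matrix.trace (hP.sqrt * M * hP.sqrt) := by
    rw [h1, Matrix.mul_assoc, Matrix.trace_mul_comm]
  have hPne : P ≠ 0 := by rintro rfl; simp at htrP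
  have hSne : hP.sqrt ≠ 0 := by
    intro h
    apply hPne
    have := hP.sqrt_mul_self
    rw [h, Matrix.zero_mul] at this
    exact this.symm
  obtain ⟨j, i, hji⟩ : ∃ j i, hP.sqrt j i ≠ 0 := by
    by_contra h; push_neg at h; exact hSne (by ext a b; simpa using h a b)
  have hherm : ∀ k l, star (hP.sqrt k l) = hP.sqrt l k := fun k l => by
    conv_rhs => rw [← hS.isHermitian.eq]
    simp [Matrix.conjTranspose_apply]
  have hxne : (fun k => hP.sqrt k i) ≠ (0 : Fin d → ℂ) := fun h => hji (by simpa using congrFun h j)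
  have hdiag : (hP.sqrt * M * hP.sqrt) i i
      = star (fun k => hP.sqrt k i) ⬝ᵥ M *ᵥ (fun k => hP.sqrt k i) := by
    calc (hP.sqrt * M * hP.sqrt) i i
        = ∑ k, ∑ l, hP.sqrt i l * M l k * hP.sqrt k i := by
          simp [Matrix.mul_apply, Finset.sum_mul]
      _ = ∑ k, ∑ l, hP.sqrt i k * M k l * hP.sqrt l i := Finset.sum_comm
      _ = star (fun k => hP.sqrt k i) ⬝ᵥ M *ᵥ (fun k => hP.sqrt k i) := by
          simp only [dotProduct, mulVec, Finset.mul_sum, Pi.star_apply]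
          exact Finset.sum_congr rfl fun k _ => Finset.sum_congr rfl fun l _ => by
            rw [hherm]; ring
  have hpos : 0 < ((hP.sqrt * M * hP.sqrt) i i).re := by
    rw [hdiag]
    exact (Complex.lt_def.mp (hM.dotProduct_mulVec_pos hxne)).1
  rw [htr, trace_re_eq_sum]
  exact Finset.sum_pos' (fun k _ => diag_re_nonneg hN k) ⟨i, Finset.mem_univ i, hpos⟩

lemma mpow_eq {A : Matrix (Fin d) (Fin d) ℂ} (hA : A.IsHermitian) (r : ℝ) :
    mpow A r = (hA.eigenvectorUnitary : Matrix (Fin d) (Fin d) ℂ) *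
      Matrix.diagonal (fun i => ((hA.eigenvalues i ^ r : ℝ) : ℂ)) *
      star (hA.eigenvectorUnitary : Matrix (Fin d) (Fin d) ℂ) := by
  rw [mpow, dif_pos hA]

lemma unitary_conj_posSemidef {u D : Matrix (Fin d) (Fin d) ℂ}
    (hD : D.PosSemidef) : (u * D * star u).PosSemidef := by
  have := hD.conjTranspose_mul_mul_same (star u)
  simpa [Matrix.star_eq_conjTranspose] using this

lemma unitary_conj_posDef {u : Matrix (Fin d) (Fin d) ℂ}
    (hu : u ∈ Matrix.unitaryGroup (Fin d) ℂ) {D : Matrix (Fin d) (Fin d) ℂ}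
    (hD : D.PosDef) : (u * D * star u).PosDef := by
  refine Matrix.PosDef.of_dotProduct_mulVec_pos (unitary_conj_posSemidef hD.posSemidef).isHermitian fun x hx => ?_
  have hx' : star u *ᵥ x ≠ 0 := by
    intro h
    apply hx
    have := congrArg (fun v => u *ᵥ v) h
    simpa [Matrix.mulVec_mulVec, (Matrix.mem_unitaryGroup_iff).mp hu] using this
  have := hD.dotProduct_mulVec_pos hx'
  have heq : star u = uᴴ := rfl
  rw [heq] at this ⊢
  simpa only [star_mulVec, dotProduct_mulVec, vecMul_vecMul, Matrix.conjTranspose_conjTranspose]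
    using this

lemma mpow_posSemidef {A : Matrix (Fin d) (Fin d) ℂ} (hA : A.PosSemidef) (r : ℝ) :
    (mpow A r).PosSemidef := by
  rw [mpow_eq hA.isHermitian]
  exact unitary_conj_posSemidef (Matrix.PosSemidef.diagonal fun i =>
    Complex.zero_le_real.mpr (Real.rpow_nonneg (hA.eigenvalues_nonneg i) r))

lemma mpow_posDef {Q : Matrix (Fin d) (Fin d) ℂ} (hQ : Q.PosDef) (r : ℝ) :
    (mpow Q r).PosDef := by
  rw [mpow_eq hQ.isHermitian]
  exact unitary_conj_posDef (hQ.isHermitian.eigenvectorUnitary).2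
    (Matrix.PosDef.diagonal fun i =>
      Complex.zero_lt_real.mpr (Real.rpow_pos_of_pos (hQ.eigenvalues_pos i) r))

lemma trace_mpow {A : Matrix (Fin d) (Fin d) ℂ} (hA : A.IsHermitian) (r : ℝ) :
    (mpow A r).trace = ∑ i, ((hA.eigenvalues i ^ r : ℝ) : ℂ) := by
  rw [mpow_eq hA, Matrix.trace_mul_cycle,
    (Matrix.mem_unitaryGroup_iff').mp (hA.eigenvectorUnitary).2, Matrix.one_mul,
    Matrix.trace_diagonal]

lemma sum_eigenvalues_eq_one {A : Matrix (Fin d) (Fin d) ℂ} (hA : IsDensityMatrix A) :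
    ∑ i, hA.1.isHermitian.eigenvalues i = 1 := by
  have h : A.trace
      = (Matrix.diagonal (RCLike.ofReal ∘ hA.1.isHermitian.eigenvalues)).trace := by
    conv_lhs => rw [hA.1.isHermitian.spectral_theorem]
    rw [Unitary.conjStarAlgAut_apply, Matrix.trace_mul_cycle,
      (Matrix.mem_unitaryGroup_iff').mp (hA.1.isHermitian.eigenvectorUnitary).2, Matrix.one_mul]
  have h2 := h.symm.trans hA.2
  rw [Matrix.trace_diagonal] at h2
  have : ((∑ i, hA.1.isHermitian.eigenvalues i : ℝ) : ℂ) = 1 := by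
    push_cast
    simpa using h2
  exact_mod_cast this

lemma trace_mpow_re_pos {A : Matrix (Fin d) (Fin d) ℂ} (hA : IsDensityMatrix A) (r : ℝ) :
    0 < ((mpow A r).trace).re := by
  rw [trace_mpow hA.1.isHermitian]
  have hsum := sum_eigenvalues_eq_one hA
  obtain ⟨i, hi⟩ : ∃ i, 0 < hA.1.isHermitian.eigenvalues i := by
    by_contra h
    push_neg at h
    have : ∑ i, hA.1.isHermitian.eigenvalues i ≤ 0 :=
      Finset.sum_nonpos fun i _ => h i
    linarith
  rw [Complex.re_sum]
  refine Finset.sum_pos' (fun k _ => by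
    simpa using Real.rpow_nonneg (hA.1.eigenvalues_nonneg k) r) ⟨i, Finset.mem_univ i, ?_⟩
  simpa using Real.rpow_pos_of_pos hi r

lemma trace_smul_re (P V : Matrix (Fin d) (Fin d) ℂ) (c : ℝ) :
    (Matrix.trace (P * (c • V))).re = c * (Matrix.trace (P * V)).re := by
  rw [mul_smul_comm, Matrix.trace_smul]
  simp [Complex.smul_re]

lemma trace_mono {P X Y : Matrix (Fin d) (Fin d) ℂ} (hP : P.PosSemidef)
    (h : loewnerLE X Y) : (Matrix.trace (P * X)).re ≤ (Matrix.trace (P * Y)).re := by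
  have h0 := trace_mul_re_nonneg hP h
  rw [Matrix.mul_sub, Matrix.trace_sub, Complex.sub_re] at h0
  linarith

lemma key_bound {α : ℝ} {A Q Qstar : Matrix (Fin d) (Fin d) ℂ}
    (hA : IsDensityMatrix A) (hQ : Q.PosDef) {r : ℝ}
    (h1 : loewnerLE (Real.exp (-r) • mpow Qstar (1 - α)) (mpow Q (1 - α)))
    (h2 : loewnerLE (mpow Q (1 - α)) (Real.exp r • mpow Qstar (1 - α))) :
    |petzRenyi α A Q - petzRenyi α A Qstar| ≤ |1 / (1 - α)| * r := by
  have hP := mpow_posSemidef hA.1 α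
  set tU := (Matrix.trace (mpow A α * mpow Q (1 - α))).re with htUdef
  set tV := (Matrix.trace (mpow A α * mpow Qstar (1 - α))).re with htVdef
  have htU : 0 < tU := trace_mul_re_pos hP (trace_mpow_re_pos hA α) (mpow_posDef hQ (1 - α))
  have h2' : tU ≤ Real.exp r * tV := by
    have := trace_mono hP h2
    rwa [trace_smul_re] at this
  have h1' : Real.exp (-r) * tV ≤ tU := by
    have := trace_mono hP h1
    rwa [trace_smul_re] at this
  have htV : 0 < tV := by
    by_contra h
    push_neg at h
    nlinarith [Real.exp_pos r, lt_of_lt_of_le htU h2']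
  have h1'' : tV ≤ Real.exp r * tU := by
    have h3 := mul_le_mul_of_nonneg_left h1' (Real.exp_pos r).le
    rw [← mul_assoc, ← Real.exp_add] at h3
    simpa using h3
  have hlog1 : Real.log tU ≤ r + Real.log tV := by
    calc Real.log tU ≤ Real.log (Real.exp r * tV) := Real.log_le_log htU h2'
      _ = r + Real.log tV := by rw [Real.log_mul (Real.exp_ne_zero r) htV.ne', Real.log_exp]
  have hlog2 : Real.log tV ≤ r + Real.log tU := by
    calc Real.log tV ≤ Real.log (Real.exp r * tU) := Real.log_le_log htV h1''
      _ = r + Real.log tU := by rw [Real.log_mul (Real.exp_ne_zero r) htU.ne', Real.log_exp]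
  have hdiff : |Real.log tU - Real.log tV| ≤ r := abs_le.mpr ⟨by linarith, by linarith⟩
  have habs : |(α - 1)⁻¹| = |1 / (1 - α)| := by
    rw [one_div, abs_inv, abs_inv, abs_sub_comm]
  calc |petzRenyi α A Q - petzRenyi α A Qstar|
      = |(α - 1)⁻¹| * |Real.log tU - Real.log tV| := by
        rw [petzRenyi, petzRenyi, ← mul_sub, abs_mul]
    _ ≤ |1 / (1 - α)| * r := by
        rw [habs]
        exact mul_le_mul_of_nonneg_left hdiff (abs_nonneg _)

lemma wrap {c L : ℝ} (hc : 0 < c) {V U : Matrix (Fin d) (Fin d) ℂ}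
    (h : ∀ r : ℝ, 0 ≤ r → loewnerLE (Real.exp (-r) • V) U → loewnerLE U (Real.exp r • V) →
      L ≤ c * r) :
    (L : EReal) ≤ (c : EReal) * dTmat V U := by
  have h1 : ((L / c : ℝ) : EReal) ≤ dTmat V U := by
    apply le_sInf
    rintro x ⟨r, hr0, rfl, hlow, hup⟩
    exact EReal.coe_le_coe_iff.mpr ((div_le_iff₀ hc).mpr
      (by linarith [h r hr0 hlow hup]))
  calc (L : EReal) = (c : EReal) * ((L / c : ℝ) : EReal) := by
        rw [← EReal.coe_mul, mul_comm c, div_mul_cancel₀ L hc.ne']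
    _ ≤ (c : EReal) * dTmat V U := mul_le_mul_of_nonneg_left h1 (by exact_mod_cast hc.le)

end AuxPetz

/-- approximation bounds for the value and the gradient of the Petz
capacity objective in terms of the Thompson metric. -/
theorem petz_capacity_gradient_approx {n d : ℕ} (α : ℝ)
    (hα : α ∈ Set.Ioo (0 : ℝ) 1 ∪ Set.Ioi (1 : ℝ))
    (A : Fin n → Matrix (Fin d) (Fin d) ℂ) (hA : ∀ j, IsDensityMatrix (A j))
    (hApos : (∑ j, A j).PosDef)
    (w : Fin n → ℝ) (hw : ∀ j, 0 < w j) (hw1 : ∑ j, w j = 1)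
    (Qstar : Matrix (Fin d) (Fin d) ℂ)
    (hQstarMem : IsDensityMatrix Qstar)
    (hQstarMin : ∀ Q, IsDensityMatrix Q → FE w A α Qstar ≤ FE w A α Q)
    (hQstarUniq : ∀ Q' : Matrix (Fin d) (Fin d) ℂ,
      (IsDensityMatrix Q' ∧ ∀ Q, IsDensityMatrix Q → FE w A α Q' ≤ FE w A α Q) →
        Q' = Qstar)
    (Q : Matrix (Fin d) (Fin d) ℂ) (hQ : Q.PosDef) :
    ((|(∑ j, w j * petzRenyi α (A j) Q) - (∑ j, w j * petzRenyi α (A j) Qstar)| : ℝ)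
        : EReal) ≤
      ((|1 / (1 - α)| : ℝ) : EReal) * dTmat (mpow Qstar (1 - α)) (mpow Q (1 - α)) ∧
    ∀ j, ((|petzRenyi α (A j) Q - petzRenyi α (A j) Qstar| : ℝ) : EReal) ≤
      ((|1 / (1 - α)| : ℝ) : EReal) * dTmat (mpow Qstar (1 - α)) (mpow Q (1 - α)) := by
  have hα1 : α ≠ 1 := by
    rcases hα with h | h
    · exact ne_of_lt h.2
    · exact ne_of_gt h
  have hc : 0 < |1 / (1 - α)| := by
    rw [abs_pos]
    exact one_div_ne_zero (sub_ne_zero.mpr (Ne.symm hα1))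
  have hkey : ∀ j, ∀ r : ℝ, 0 ≤ r →
      loewnerLE (Real.exp (-r) • mpow Qstar (1 - α)) (mpow Q (1 - α)) →
      loewnerLE (mpow Q (1 - α)) (Real.exp r • mpow Qstar (1 - α)) →
      |petzRenyi α (A j) Q - petzRenyi α (A j) Qstar| ≤ |1 / (1 - α)| * r :=
    fun j r _ h1 h2 => key_bound (hA j) hQ h1 h2
  constructor
  · apply wrap hc
    intro r hr h1 h2
    calc |(∑ j, w j * petzRenyi α (A j) Q) - ∑ j, w j * petzRenyi α (A j) Qstar|
        = |∑ j, w j * (petzRenyi α (A j) Q - petzRenyi α (A j) Qstar)| := by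
          rw [← Finset.sum_sub_distrib]
          congr 1
          exact Finset.sum_congr rfl fun j _ => (mul_sub _ _ _).symm
      _ ≤ ∑ j, |w j * (petzRenyi α (A j) Q - petzRenyi α (A j) Qstar)| :=
          Finset.abs_sum_le_sum_abs _ _
      _ = ∑ j, w j * |petzRenyi α (A j) Q - petzRenyi α (A j) Qstar| :=
          Finset.sum_congr rfl fun j _ => by rw [abs_mul, abs_of_pos (hw j)]
      _ ≤ ∑ j, w j * (|1 / (1 - α)| * r) :=
          Finset.sum_le_sum fun j _ =>
            mul_le_mul_of_nonneg_left (hkey j r hr h1 h2) (hw j).le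
      _ = |1 / (1 - α)| * r := by rw [← Finset.sum_mul, hw1, one_mul]
  · intro j
    exact wrap hc fun r hr h1 h2 => hkey j r hr h1 h2

end
end

section
/- Let α ∈ [1/2, 1) and let a > b > 0 be real numbers. Then (a^{1/2} b^{α−1/2} − a^{α−1/2} b^{1/2}) / (1−α) ≤ (a^α − b^α) / α. -/
open scoped ComplexOrder
open Matrix

noncomputable section

private lemma kpos (β x : ℝ) (hβ0 : 0 ≤ β) (hβ1 : β ≤ 1) (hx : 0 < x) :
    1 ≤ (1 - β) * x ^ β + β * x ^ (β - 1) := by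
  have h := Real.geom_mean_le_arith_mean2_weighted (by linarith : (0:ℝ) ≤ 1 - β) hβ0
    (Real.rpow_nonneg hx.le β) (Real.rpow_nonneg hx.le (β - 1)) (by ring)
  calc (1:ℝ) = (x ^ β) ^ (1 - β) * (x ^ (β - 1)) ^ β := by
        rw [← Real.rpow_mul hx.le, ← Real.rpow_mul hx.le, ← Real.rpow_add hx]
        rw [show β * (1 - β) + (β - 1) * β = 0 by ring, Real.rpow_zero]
    _ ≤ _ := h

private lemma key (β t : ℝ) (hβ0 : 0 ≤ β) (hβ1 : β < 1) (ht : 1 ≤ t) :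
    (1 + β) * (t - t ^ β) ≤ (1 - β) * (t ^ (1 + β) - 1) := by
  set f : ℝ → ℝ := fun x => (1 - β) * (x ^ (1 + β) - 1) - (1 + β) * (x - x ^ β) with hf
  have hderiv : ∀ x : ℝ, x ≠ 0 →
      HasDerivAt f ((1 + β) * ((1 - β) * x ^ β + β * x ^ (β - 1) - 1)) x := by
    intro x hx0
    have h1 := (Real.hasDerivAt_rpow_const (p := 1 + β) (Or.inl hx0)).const_mul (1 - β)
    have h2 := ((hasDerivAt_id x).sub
      (Real.hasDerivAt_rpow_const (p := β) (Or.inl hx0))).const_mul (1 + β)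
    have H : HasDerivAt f
        ((1 - β) * ((1 + β) * x ^ (1 + β - 1)) - (1 + β) * (1 - β * x ^ (β - 1))) x := by
      simpa [f, mul_sub, Pi.sub_def] using (h1.sub_const (1 - β)).sub h2
    have e : (1 - β) * ((1 + β) * x ^ (1 + β - 1)) - (1 + β) * (1 - β * x ^ (β - 1))
        = (1 + β) * ((1 - β) * x ^ β + β * x ^ (β - 1) - 1) := by
      rw [show (1:ℝ) + β - 1 = β by ring]; ring
    rwa [e] at H
  have hmono : MonotoneOn f (Set.Ici 1) := by
    apply monotoneOn_of_deriv_nonneg (convex_Ici 1)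
    · intro x hx
      exact ((hderiv x (by simp only [Set.mem_Ici] at hx; linarith)).continuousAt).continuousWithinAt
    · intro x hx
      rw [interior_Ici] at hx
      exact ((hderiv x (by simp only [Set.mem_Ioi] at hx; linarith)).differentiableAt).differentiableWithinAt
    · intro x hx
      rw [interior_Ici] at hx
      simp only [Set.mem_Ioi] at hx
      rw [(hderiv x (by linarith)).deriv]
      have := kpos β x hβ0 hβ1.le (by linarith)
      nlinarith
  have h0 : f 1 = 0 := by simp [f, Real.one_rpow]
  have := hmono (Set.self_mem_Ici) (Set.mem_Ici.2 ht) ht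
  rw [h0] at this
  simpa [f, sub_nonneg] using this


/-- for `α ∈ [1/2, 1)` and `a > b > 0`,
`(a^(1/2) b^(α-1/2) - a^(α-1/2) b^(1/2)) / (1-α) ≤ (a^α - b^α) / α`. -/
theorem rpow_cross_inequality (α a b : ℝ) (hα : α ∈ Set.Ico (1/2 : ℝ) 1)
    (hb : 0 < b) (hab : b < a) :
    (a ^ ((1:ℝ)/2) * b ^ (α - 1/2) - a ^ (α - 1/2) * b ^ ((1:ℝ)/2)) / (1 - α) ≤
      (a ^ α - b ^ α) / α := by
  obtain ⟨hα1, hα2⟩ := hα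
  have ha : 0 < a := hb.trans hab
  have hc : (1:ℝ) < a / b := (one_lt_div hb).2 hab
  have ht : (1:ℝ) ≤ (a / b) ^ ((1:ℝ)/2) := Real.one_le_rpow hc.le (by norm_num)
  have hk := key (2*α - 1) ((a / b) ^ ((1:ℝ)/2)) (by linarith) (by linarith) ht
  have hc0 : (0:ℝ) < a / b := by positivity
  -- rewrite powers
  have e1 : ((a / b) ^ ((1:ℝ)/2)) ^ (2*α - 1) = (a / b) ^ (α - 1/2) := by
    rw [← Real.rpow_mul hc0.le]; ring_nf
  have e2 : ((a / b) ^ ((1:ℝ)/2)) ^ (1 + (2*α - 1)) = (a / b) ^ α := by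
    rw [← Real.rpow_mul hc0.le]; ring_nf
  rw [e1, e2] at hk
  -- multiply through by b ^ α
  have hbα : (0:ℝ) < b ^ α := Real.rpow_pos_of_pos hb α
  have m1 : (a / b) ^ ((1:ℝ)/2) * b ^ α = a ^ ((1:ℝ)/2) * b ^ (α - 1/2) := by
    rw [Real.div_rpow ha.le hb.le, Real.rpow_sub hb]
    field_simp
  have m2 : (a / b) ^ (α - 1/2) * b ^ α = a ^ (α - 1/2) * b ^ ((1:ℝ)/2) := by
    rw [Real.div_rpow ha.le hb.le, Real.rpow_sub hb]
    field_simp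
  have m3 : (a / b) ^ α * b ^ α = a ^ α := by
    rw [Real.div_rpow ha.le hb.le]
    field_simp
  have hk2 := mul_le_mul_of_nonneg_right hk hbα.le
  rw [div_le_div_iff₀ (by linarith) (by linarith)]
  nlinarith [hk2, m1, m2, m3]


end
end

section
/- Consider a Fisher market with n buyers and d goods, where each buyer j has budget w[j] > 0 with ∑_{j=1}^n w[j] = 1, utility weights a_j ∈ Δ_d with ∑_{j=1}^n a_j having all entries strictly positive, and elasticity ρ_j ∈ (0, 1). Let the total demand at prices p (entrywise positive) be x(p) := ∑_{j=1}^n w[j] · ( a_j^{1/(1−ρ_j)} ⊙ p^{−1/(1−ρ_j)} ) / ⟨ a_j^{1/(1−ρ_j)}, p^{−ρ_j/(1−ρ_j)} ⟩, and let p_⋆ be an entrywise positive price vector with x(p_⋆) = 1 (the all-ones vector). Let ρ̂_i ∈ [max_j ρ_j, 1) for each i, let p be entrywise positive, let ∅ ≠ I ⊆ {1,…,d}, and define p'[i] := p[i] · x(p)[i]^{1−ρ̂_i} for i ∈ I and p'[k] := p[k] for k ∉ I. Then d_T(p_⋆, p') ≤ d_T(p_⋆, p). -/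
open scoped ComplexOrder
open Matrix

noncomputable section

lemma demand_le_aux {n d : ℕ} (w : Fin n → ℝ) (hw : ∀ j, 0 ≤ w j)
    (a : Fin n → Fin d → ℝ) (ha0 : ∀ j k, 0 ≤ a j k) (ha1 : ∀ j, ∑ k, a j k = 1)
    (ρ : Fin n → ℝ) (hρ : ∀ j, ρ j ∈ Set.Ioo (0:ℝ) 1)
    (q p : Fin d → ℝ) (hq : ∀ k, 0 < q k) (hp : ∀ k, 0 < p k)
    (r : ℝ) (hr : 0 ≤ r) (hb : ∀ k, p k ≤ q k * Real.exp r)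
    (chat : ℝ) (hchat : ∀ j, 1 / (1 - ρ j) ≤ chat)
    (i : Fin d) (t : ℝ) (ht : p i = q i * Real.exp t) (htr : t ≤ r) :
    demand w a ρ p i ≤ Real.exp (chat * (r - t) - r) * demand w a ρ q i := by
  unfold demand
  rw [Finset.mul_sum]
  refine Finset.sum_le_sum fun j _ => ?_
  set c := 1 / (1 - ρ j) with hc
  set s := ρ j / (1 - ρ j) with hs
  obtain ⟨hρ0, hρ1⟩ := hρ j
  have h1ρ : 0 < 1 - ρ j := by linarith
  have hcpos : 0 < c := by positivity
  have hspos : 0 ≤ s := by positivity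
  have hsc : s = c - 1 := by rw [hs, hc]; field_simp; ring
  obtain ⟨k0, hk0⟩ : ∃ k, 0 < a j k := by
    by_contra h
    push_neg at h
    have h2 : ∑ k, a j k ≤ 0 := Finset.sum_nonpos fun k _ => h k
    rw [ha1 j] at h2; linarith
  have hterm : ∀ (u : Fin d → ℝ), (∀ k, 0 < u k) → ∀ k, 0 ≤ a j k ^ c * u k ^ (-s) :=
    fun u hu k => mul_nonneg (Real.rpow_nonneg (ha0 j k) c)
      (Real.rpow_pos_of_pos (hu k) _).le
  have hDq : 0 < ∑ k, a j k ^ c * q k ^ (-s) := by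
    have h1 : 0 < a j k0 ^ c * q k0 ^ (-s) :=
      mul_pos (Real.rpow_pos_of_pos hk0 c) (Real.rpow_pos_of_pos (hq k0) _)
    exact h1.trans_le (Finset.single_le_sum (fun k _ => hterm q hq k) (Finset.mem_univ k0))
  have hDp : 0 < ∑ k, a j k ^ c * p k ^ (-s) := by
    have h1 : 0 < a j k0 ^ c * p k0 ^ (-s) :=
      mul_pos (Real.rpow_pos_of_pos hk0 c) (Real.rpow_pos_of_pos (hp k0) _)
    exact h1.trans_le (Finset.single_le_sum (fun k _ => hterm p hp k) (Finset.mem_univ k0))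
  have hDle : Real.exp (-(s*r)) * (∑ k, a j k ^ c * q k ^ (-s)) ≤
      ∑ k, a j k ^ c * p k ^ (-s) := by
    rw [Finset.mul_sum]
    refine Finset.sum_le_sum fun k _ => ?_
    have h1 : (q k * Real.exp r) ^ (-s) ≤ p k ^ (-s) :=
      Real.rpow_le_rpow_of_nonpos (hp k) (hb k) (by linarith)
    have h2 : (q k * Real.exp r) ^ (-s) = q k ^ (-s) * Real.exp (-(s*r)) := by
      rw [Real.mul_rpow (hq k).le (Real.exp_pos r).le,
        Real.rpow_def_of_pos (Real.exp_pos r), Real.log_exp]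
      ring_nf
    calc Real.exp (-(s*r)) * (a j k ^ c * q k ^ (-s))
        = a j k ^ c * ((q k * Real.exp r) ^ (-s)) := by rw [h2]; ring
      _ ≤ a j k ^ c * p k ^ (-s) :=
          mul_le_mul_of_nonneg_left h1 (Real.rpow_nonneg (ha0 j k) c)
  have hNp : a j i ^ c * p i ^ (-c) = Real.exp (-(c*t)) * (a j i ^ c * q i ^ (-c)) := by
    rw [ht, Real.mul_rpow (hq i).le (Real.exp_pos t).le,
      Real.rpow_def_of_pos (Real.exp_pos t), Real.log_exp]
    ring_nf
  have hNq0 : 0 ≤ w j * (a j i ^ c * q i ^ (-c)) :=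
    mul_nonneg (hw j) (mul_nonneg (Real.rpow_nonneg (ha0 j i) c)
      (Real.rpow_pos_of_pos (hq i) _).le)
  have hexps : Real.exp (s*r - c*t) ≤ Real.exp (chat*(r-t) - r) := by
    apply Real.exp_le_exp.mpr
    have h3 : c * (r - t) ≤ chat * (r - t) :=
      mul_le_mul_of_nonneg_right (hchat j) (by linarith)
    have h4 : s*r - c*t = c*(r-t) - r := by rw [hsc]; ring
    linarith
  calc w j * (a j i ^ c * p i ^ (-c)) / (∑ k, a j k ^ c * p k ^ (-s))
      = Real.exp (-(c*t)) * (w j * (a j i ^ c * q i ^ (-c))) /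
          (∑ k, a j k ^ c * p k ^ (-s)) := by rw [hNp]; ring_nf
    _ ≤ Real.exp (-(c*t)) * (w j * (a j i ^ c * q i ^ (-c))) /
          (Real.exp (-(s*r)) * (∑ k, a j k ^ c * q k ^ (-s))) := by
        gcongr
    _ = Real.exp (s*r - c*t) * (w j * (a j i ^ c * q i ^ (-c)) /
          (∑ k, a j k ^ c * q k ^ (-s))) := by
        rw [show Real.exp (s*r - c*t) = Real.exp (-(c*t)) / Real.exp (-(s*r)) by
          rw [← Real.exp_sub]; ring_nf]
        field_simp
    _ ≤ Real.exp (chat*(r-t) - r) * (w j * (a j i ^ c * q i ^ (-c)) /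
          (∑ k, a j k ^ c * q k ^ (-s))) :=
        mul_le_mul_of_nonneg_right hexps (div_nonneg hNq0 hDq.le)

/-- the asynchronous tâtonnement update does not increase the Thompson
distance to the equilibrium prices. -/
theorem fisher_update_nonexpansive {n d : ℕ} (hn : 0 < n)
    (w : Fin n → ℝ) (hw : ∀ j, 0 < w j) (hw1 : ∑ j, w j = 1)
    (a : Fin n → Fin d → ℝ) (ha : ∀ j, memSimplex (a j)) (hapos : ∀ i, 0 < ∑ j, a j i)
    (ρ : Fin n → ℝ) (hρ : ∀ j, ρ j ∈ Set.Ioo (0 : ℝ) 1)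
    (pstar : Fin d → ℝ) (hpstarPos : ∀ i, 0 < pstar i)
    (hpstarEq : demand w a ρ pstar = fun _ => 1)
    (rhohat : Fin d → ℝ) (hrhohat : ∀ i, (∀ j, ρ j ≤ rhohat i) ∧ rhohat i < 1)
    (p : Fin d → ℝ) (hp : ∀ i, 0 < p i)
    (I : Finset (Fin d)) (hI : I.Nonempty) :
    dTvec pstar
        (fun i => if i ∈ I then p i * (demand w a ρ p i) ^ (1 - rhohat i) else p i) ≤
      dTvec pstar p := by
  obtain ⟨i0, hi0⟩ := hI
  have hne : (Finset.univ : Finset (Fin d)).Nonempty := ⟨i0, Finset.mem_univ i0⟩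
  set f : Fin d → ℝ := fun k => |Real.log (pstar k / p k)| with hf
  set R : ℝ := max 0 (Finset.univ.sup' hne f) with hR
  have hR0 : 0 ≤ R := le_max_left _ _
  have hfR : ∀ k, f k ≤ R := fun k =>
    (Finset.le_sup' f (Finset.mem_univ k)).trans (le_max_right _ _)
  have hsymm : ∀ k, Real.log (p k / pstar k) = -Real.log (pstar k / p k) := fun k => by
    rw [← Real.log_inv, inv_div]
  have habs : ∀ k, |Real.log (p k / pstar k)| ≤ R := fun k => by
    rw [hsymm k, abs_neg]; exact hfR k
  -- entrywise exponential bounds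
  have hb1 : ∀ k, p k ≤ pstar k * Real.exp R := by
    intro k
    have h1 : Real.log (p k / pstar k) ≤ R := (abs_le.1 (habs k)).2
    have h2 : p k / pstar k ≤ Real.exp R := by
      rw [← Real.exp_log (div_pos (hp k) (hpstarPos k))]
      exact Real.exp_le_exp.2 h1
    calc p k = pstar k * (p k / pstar k) := by field_simp [(hpstarPos k).ne']
      _ ≤ pstar k * Real.exp R := by gcongr; exact (hpstarPos k).le
  have hb2 : ∀ k, pstar k ≤ p k * Real.exp R := by
    intro k
    have h1 : Real.log (pstar k / p k) ≤ R := (abs_le.1 (abs_le.2 ⟨(abs_le.1 (hfR k)).1, (abs_le.1 (hfR k)).2⟩)).2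
    have h2 : pstar k / p k ≤ Real.exp R := by
      rw [← Real.exp_log (div_pos (hpstarPos k) (hp k))]
      exact Real.exp_le_exp.2 h1
    calc pstar k = p k * (pstar k / p k) := by field_simp [(hp k).ne']
      _ ≤ p k * Real.exp R := by gcongr; exact (hp k).le
  -- key bound for updated coordinates
  have hkey : ∀ i ∈ I, 0 < demand w a ρ p i ∧
      |Real.log (pstar i / (p i * (demand w a ρ p i) ^ (1 - rhohat i)))| ≤ R := by
    intro i _
    obtain ⟨hle, hlt⟩ := hrhohat i
    set t : ℝ := Real.log (p i / pstar i) with hTdef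
    have hT : |t| ≤ R := habs i
    have h1ρ : 0 < 1 - rhohat i := by linarith
    set ch : ℝ := 1 / (1 - rhohat i) with hch
    have hcc : (1 - rhohat i) * ch = 1 := by rw [hch]; field_simp
    have hchat : ∀ j, 1 / (1 - ρ j) ≤ ch := by
      intro j
      apply one_div_le_one_div_of_le h1ρ
      have := hle j; linarith
    have ht : p i = pstar i * Real.exp t := by
      rw [hTdef, Real.exp_log (div_pos (hp i) (hpstarPos i))]; field_simp [(hpstarPos i).ne']
    have ht' : pstar i = p i * Real.exp (-t) := by
      rw [ht, Real.exp_neg]; field_simp [(Real.exp_pos t).ne', (hpstarPos i).ne']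
    set x : ℝ := demand w a ρ p i with hx
    have hup : x ≤ Real.exp (ch * (R - t) - R) := by
      have h3 := demand_le_aux w (fun j => (hw j).le) a (fun j => (ha j).1)
        (fun j => (ha j).2) ρ hρ pstar p hpstarPos hp R hR0 hb1 ch hchat i t ht
        (abs_le.1 hT).2
      rw [hpstarEq] at h3
      simpa using h3
    have hlo : 1 ≤ Real.exp (ch * (R + t) - R) * x := by
      have h3 := demand_le_aux w (fun j => (hw j).le) a (fun j => (ha j).1)
        (fun j => (ha j).2) ρ hρ p pstar hp hpstarPos R hR0 hb2 ch hchat i (-t) ht'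
        (by linarith [(abs_le.1 hT).1])
      rw [hpstarEq] at h3
      have h4 : R - -t = R + t := by ring
      rw [h4] at h3
      simpa using h3
    have hxpos : 0 < x := by
      by_contra hxn
      push_neg at hxn
      have := mul_nonpos_of_nonneg_of_nonpos (Real.exp_pos (ch * (R + t) - R)).le hxn
      linarith
    refine ⟨hxpos, ?_⟩
    have hlogup : Real.log x ≤ ch * (R - t) - R := (Real.log_le_iff_le_exp hxpos).2 hup
    have hloglo : R - ch * (R + t) ≤ Real.log x := by
      have h5 : Real.exp (R - ch * (R + t)) ≤ x := by
        calc Real.exp (R - ch * (R + t)) = Real.exp (R - ch * (R + t)) * 1 := by ring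
          _ ≤ Real.exp (R - ch * (R + t)) * (Real.exp (ch * (R + t) - R) * x) :=
              mul_le_mul_of_nonneg_left hlo (Real.exp_pos _).le
          _ = x := by rw [← mul_assoc, ← Real.exp_add]; norm_num
      exact (Real.le_log_iff_exp_le hxpos).2 h5
    have hxrne : (0:ℝ) < x ^ (1 - rhohat i) := Real.rpow_pos_of_pos hxpos _
    have hlogeq : Real.log (pstar i / (p i * x ^ (1 - rhohat i))) =
        -t - (1 - rhohat i) * Real.log x := by
      rw [Real.log_div (hpstarPos i).ne' (mul_pos (hp i) hxrne).ne',
        Real.log_mul (hp i).ne' hxrne.ne', Real.log_rpow hxpos]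
      have hlogt : Real.log (p i / pstar i) = Real.log (p i) - Real.log (pstar i) :=
        Real.log_div (hp i).ne' (hpstarPos i).ne'
      rw [hTdef, hlogt]; ring
    rw [hlogeq]
    have hmu : (1 - rhohat i) * (R - ch * (R + t)) = (1 - rhohat i) * R - (R + t) := by
      linear_combination (-(R + t)) * hcc
    have hmu2 : (1 - rhohat i) * (ch * (R - t) - R) = (R - t) - (1 - rhohat i) * R := by
      linear_combination (R - t) * hcc
    have hlo2 : (1 - rhohat i) * (R - ch * (R + t)) ≤ (1 - rhohat i) * Real.log x :=
      mul_le_mul_of_nonneg_left hloglo h1ρ.le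
    have hup2 : (1 - rhohat i) * Real.log x ≤ (1 - rhohat i) * (ch * (R - t) - R) :=
      mul_le_mul_of_nonneg_left hlogup h1ρ.le
    have hRnn : 0 ≤ (1 - rhohat i) * R := mul_nonneg h1ρ.le hR0
    rw [abs_le]
    constructor
    · nlinarith [hup2, hmu2, hRnn]
    · nlinarith [hlo2, hmu, hRnn]
  -- EReal bookkeeping
  have hstepA : (R : EReal) ≤ dTvec pstar p := by
    obtain ⟨k1, -, hk1⟩ := Finset.exists_mem_eq_sup' hne f
    have h1 : ((f k1 : ℝ) : EReal) ≤ dTvec pstar p := by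
      unfold dTvec
      refine le_sup_of_le_left (le_iSup_of_le k1 ?_)
      rw [if_pos ⟨hpstarPos k1, hp k1⟩]
    have h2 : (0 : EReal) ≤ dTvec pstar p := le_sup_right
    rw [hR, hk1]
    rcases le_total 0 (f k1) with h | h
    · rw [max_eq_right h]; exact h1
    · rw [max_eq_left h]; exact_mod_cast h2
  refine le_trans ?_ hstepA
  unfold dTvec
  apply sup_le
  · apply iSup_le
    intro i
    by_cases hiI : i ∈ I
    · simp only [if_pos hiI]
      obtain ⟨hxpos, hbound⟩ := hkey i hiI
      rw [if_pos ⟨hpstarPos i, mul_pos (hp i) (Real.rpow_pos_of_pos hxpos _)⟩]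
      exact_mod_cast hbound
    · simp only [if_neg hiI]
      rw [if_pos ⟨hpstarPos i, hp i⟩]
      exact_mod_cast hfR i
  · exact_mod_cast hR0


end
end
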